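/- Let S be a countable discrete inverse semigroup. If S satisfies the Følner condition but does not satisfy the proper Følner condition, then S has a minimal projection. -/
import Mathlib


/-- Mixin recording that a semigroup with a star operation is an inverse semigroup:
for every `s` the element `star s` is the unique `t` with `s t s = s` and `t s t = t`. -/
class IsInverseSemigroup (S : Type*) [Semigroup S] [Star S] : Prop where
  mul_star_mul_self : ∀ s : S, s * star s * s = s
  star_mul_self_mul_star : ∀ s : S, star s * s * star s = star s
  star_unique : ∀ s t : S, s * t * s = s → t * s * t = t → t = star s

/-- The Følner condition: for every `ε > 0` and finite `𝓕 ⊆ S` there is a finite non-empty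
`F ⊆ S` with `|sF ∪ F| ≤ (1+ε)|F|` for all `s ∈ 𝓕`. -/
def FolnerCondition (S : Type*) [Mul S] : Prop :=
  ∀ ε : ℝ, 0 < ε → ∀ 𝓕 : Finset S, ∃ F : Finset S, F.Nonempty ∧
    ∀ s ∈ 𝓕, ((((fun t => s * t) '' (F : Set S)) ∪ (F : Set S)).ncard : ℝ) ≤ (1 + ε) * F.card

/-- The proper Følner condition: in addition the Følner set `F` can be chosen to contain
any prescribed finite set `A`. -/
def ProperFolnerCondition (S : Type*) [Mul S] : Prop :=
  ∀ ε : ℝ, 0 < ε → ∀ 𝓕 A : Finset S, ∃ F : Finset S, F.Nonempty ∧ A ⊆ F ∧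
    ∀ s ∈ 𝓕, ((((fun t => s * t) '' (F : Set S)) ∪ (F : Set S)).ncard : ℝ) ≤ (1 + ε) * F.card

section Alg
variable {S : Type*} [Monoid S] [Star S] [IsInverseSemigroup S]

open IsInverseSemigroup

lemma inv_star_star (s : S) : star (star s) = s :=
  (star_unique (star s) s (star_mul_self_mul_star s) (mul_star_mul_self s)).symm

lemma inv_idem_star_mul (s : S) : (star s * s) * (star s * s) = star s * s := by
  have := mul_star_mul_self s
  calc (star s * s) * (star s * s) = star s * (s * star s * s) := by
        simp [mul_assoc]
    _ = star s * s := by rw [this]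

lemma inv_idem_mul_star (s : S) : (s * star s) * (s * star s) = s * star s := by
  have := star_mul_self_mul_star s
  calc (s * star s) * (s * star s) = s * (star s * s * star s) := by simp [mul_assoc]
    _ = s * star s := by rw [this]

lemma inv_star_idem {e : S} (he : e * e = e) : star e = e :=
  (star_unique e e (by rw [he, he]) (by rw [he, he])).symm

lemma inv_idem_mul {e f : S} (he : e * e = e) (hf : f * f = f) :
    (e * f) * (e * f) = e * f := by
  set y := star (e * f) with hy
  have h1 : f * y * e = y := by
    rw [hy]
    apply star_unique
    · calc e * f * (f * y * e) * (e * f)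
          = e * (f * f) * y * (e * e) * f := by simp [mul_assoc]
        _ = e * f * y * (e * f) := by rw [he, hf]; simp [mul_assoc]
        _ = e * f := by
            have h := mul_star_mul_self (e * f)
            rw [← hy] at h; simpa [mul_assoc] using h
    · calc f * y * e * (e * f) * (f * y * e)
          = f * (y * ((e * e) * (f * f)) * y) * e := by simp [mul_assoc]
        _ = f * (y * (e * f) * y) * e := by rw [he, hf]
        _ = f * y * e := by
            have := star_mul_self_mul_star (e * f)
            rw [← hy] at this
            rw [show y * (e * f) * y = y from by simpa [mul_assoc] using this]
  have h2 : y * y = y := by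
    calc y * y = f * y * e * (f * y * e) := by rw [h1]
      _ = f * (y * (e * f) * y) * e := by simp [mul_assoc]
      _ = f * y * e := by
          have := star_mul_self_mul_star (e * f)
          rw [← hy] at this
          rw [show y * (e * f) * y = y from by simpa [mul_assoc] using this]
      _ = y := h1
  have h3 : star y = y := inv_star_idem h2
  have h4 : e * f = y := by rw [← h3, hy, inv_star_star]
  rw [h4]; exact h2

lemma inv_idem_comm {e f : S} (he : e * e = e) (hf : f * f = f) :
    e * f = f * e := by
  have hef := inv_idem_mul he hf
  have hfe := inv_idem_mul hf he
  have : f * e = star (e * f) := by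
    apply star_unique
    · calc e * f * (f * e) * (e * f) = e * (f * f) * (e * e) * f := by simp [mul_assoc]
        _ = (e * f) * (e * f) := by rw [he, hf]; simp [mul_assoc]
        _ = e * f := hef
    · calc f * e * (e * f) * (f * e) = f * (e * e) * (f * f) * e := by simp [mul_assoc]
        _ = (f * e) * (f * e) := by rw [he, hf]; simp [mul_assoc]
        _ = f * e := hfe
  rw [this, inv_star_idem hef]

end Alg

def FolIneq {S : Type*} [Mul S] (ε : ℝ) (𝓕 F : Finset S) : Prop :=
  ∀ s ∈ 𝓕, ((((fun t => s * t) '' (F : Set S)) ∪ (F : Set S)).ncard : ℝ) ≤ (1 + ε) * F.card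
section Comb
variable {S : Type*} [Monoid S]

lemma fol_finite (s : S) (F : Finset S) :
    (((fun t => s * t) '' (F : Set S)) ∪ (F : Set S)).Finite :=
  (F.finite_toSet.image _).union F.finite_toSet

/-- Invariant sets satisfy the Følner inequality. -/
lemma folIneq_of_inv {ε : ℝ} (hε : 0 ≤ ε) {𝓕 F : Finset S}
    (h : ∀ s ∈ 𝓕, ∀ x ∈ F, s * x ∈ F) : FolIneq ε 𝓕 F := by
  intro s hs
  have himg : ((fun t => s * t) '' (F : Set S)) ∪ (F : Set S) = (F : Set S) := by
    apply Set.union_eq_self_of_subset_left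
    rintro y ⟨x, hx, rfl⟩
    exact h s hs x hx
  rw [himg, Set.ncard_coe_finset]
  nlinarith [Nat.cast_nonneg (α := ℝ) F.card]

/-- From unbounded Følner sets we get the proper Følner condition. -/
lemma proper_of_unbounded
    (hU : ∀ ε : ℝ, 0 < ε → ∀ 𝓕 : Finset S, ∀ N : ℕ, ∃ F : Finset S,
      F.Nonempty ∧ FolIneq ε 𝓕 F ∧ N ≤ F.card) :
    ProperFolnerCondition S := by
  classical
  intro ε hε 𝓕 A
  obtain ⟨N, hN⟩ := exists_nat_ge (4 * (A.card : ℝ) / ε)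
  obtain ⟨F, hFne, hFol, hFcard⟩ := hU (ε / 2) (by linarith) 𝓕 N
  refine ⟨F ∪ A, hFne.mono Finset.subset_union_left, Finset.subset_union_right, ?_⟩
  intro s hs
  have hcard : (4 * (A.card : ℝ) / ε) ≤ F.card := hN.trans (by exact_mod_cast hFcard)
  have h4 : 4 * (A.card : ℝ) ≤ ε * F.card := by
    rw [div_le_iff₀ hε] at hcard; linarith
  have hsub : (((fun t => s * t) '' ((F ∪ A : Finset S) : Set S)) ∪ ((F ∪ A : Finset S) : Set S))
      ⊆ ((((fun t => s * t) '' (F : Set S)) ∪ (F : Set S)) ∪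
         (((fun t => s * t) '' (A : Set S)) ∪ (A : Set S))) := by
    rw [Finset.coe_union, Set.image_union]
    intro x hx
    rcases hx with (hx | hx) | (hx | hx)
    · exact Or.inl (Or.inl hx)
    · exact Or.inr (Or.inl hx)
    · exact Or.inl (Or.inr hx)
    · exact Or.inr (Or.inr hx)
  have hfin1 := fol_finite s F
  have hfin2 := fol_finite s A
  have hle1 : (((fun t => s * t) '' ((F ∪ A : Finset S) : Set S)) ∪
      ((F ∪ A : Finset S) : Set S)).ncard ≤
      ((((fun t => s * t) '' (F : Set S)) ∪ (F : Set S)).ncard +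
       (((fun t => s * t) '' (A : Set S)) ∪ (A : Set S)).ncard) := by
    refine le_trans (Set.ncard_le_ncard hsub (hfin1.union hfin2)) ?_
    exact Set.ncard_union_le _ _
  have hle2 : (((fun t => s * t) '' (A : Set S)) ∪ (A : Set S)).ncard ≤ 2 * A.card := by
    refine le_trans (Set.ncard_union_le _ _) ?_
    have h1 : ((fun t => s * t) '' (A : Set S)).ncard ≤ A.card := by
      simpa [Set.ncard_coe_finset] using Set.ncard_image_le (f := fun t => s * t)
        (s := (A : Set S)) A.finite_toSet
    simp only [Set.ncard_coe_finset]
    omega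
  have hF2 := hFol s hs
  have hFA : (F.card : ℝ) ≤ ((F ∪ A).card : ℝ) := by
    exact_mod_cast Finset.card_le_card (Finset.subset_union_left)
  calc ((((fun t => s * t) '' ((F ∪ A : Finset S) : Set S)) ∪
      ((F ∪ A : Finset S) : Set S)).ncard : ℝ)
      ≤ (((((fun t => s * t) '' (F : Set S)) ∪ (F : Set S)).ncard + 2 * A.card : ℕ) : ℝ) :=
        Nat.cast_le.mpr (hle1.trans (by omega))
    _ = ((((fun t => s * t) '' (F : Set S)) ∪ (F : Set S)).ncard : ℝ) + 2 * A.card := by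
        push_cast; ring
    _ ≤ (1 + ε / 2) * F.card + 2 * A.card := by linarith
    _ ≤ (1 + ε) * F.card := by linarith
    _ ≤ (1 + ε) * (F ∪ A).card := by nlinarith

end Comb

section Comb2
variable {S : Type*} [Monoid S]

lemma inv_of_bounded (h1 : FolnerCondition S) {ε₀ : ℝ} (hε₀ : 0 < ε₀) {𝓕₀ : Finset S} {N : ℕ}
    (hbd : ∀ F : Finset S, F.Nonempty → FolIneq ε₀ 𝓕₀ F → F.card < N)
    (𝓕 : Finset S) :
    ∃ F : Finset S, F.Nonempty ∧ F.card < N ∧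
      (∀ s ∈ 𝓕, ∀ x ∈ F, s * x ∈ F) ∧ (∀ s ∈ 𝓕₀, ∀ x ∈ F, s * x ∈ F) := by
  classical
  set ε₁ : ℝ := min ε₀ (1 / (N + 1)) with hε₁def
  have hε₁pos : 0 < ε₁ := lt_min hε₀ (by positivity)
  obtain ⟨F, hFne, hFol⟩ := h1 ε₁ hε₁pos (𝓕 ∪ 𝓕₀)
  have hF0 : FolIneq ε₀ 𝓕₀ F := by
    intro s hs
    refine (hFol s (Finset.mem_union_right _ hs)).trans ?_
    have : ε₁ ≤ ε₀ := min_le_left _ _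
    nlinarith [Nat.cast_nonneg (α := ℝ) F.card]
  have hcard : F.card < N := hbd F hFne hF0
  refine ⟨F, hFne, hcard, ?_, ?_⟩ <;>
  · intro s hs x hx
    have hmem : s ∈ 𝓕 ∪ 𝓕₀ := by
      first
        | exact Finset.mem_union_left _ hs
        | exact Finset.mem_union_right _ hs
    have hb := hFol s hmem
    have hεb : ε₁ * F.card < 1 := by
      have h1' : ε₁ ≤ 1 / (N + 1) := min_le_right _ _
      have h2' : (F.card : ℝ) < N := by exact_mod_cast hcard
      have h3' : (0:ℝ) < N + 1 := by positivity
      rw [div_eq_inv_mul, mul_one] at h1'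
      have ha : ε₁ * F.card ≤ ((N:ℝ) + 1)⁻¹ * F.card :=
        mul_le_mul_of_nonneg_right h1' (Nat.cast_nonneg _)
      have hb' : ((N:ℝ) + 1)⁻¹ * F.card < ((N:ℝ) + 1)⁻¹ * ((N:ℝ) + 1) :=
        mul_lt_mul_of_pos_left (by linarith) (by positivity)
      rw [inv_mul_cancel₀ (by positivity)] at hb'
      linarith
    have hnat : (((fun t => s * t) '' (F : Set S)) ∪ (F : Set S)).ncard ≤ F.card := by
      have : ((((fun t => s * t) '' (F : Set S)) ∪ (F : Set S)).ncard : ℝ) < F.card + 1 := by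
        nlinarith
      exact_mod_cast Nat.lt_add_one_iff.mp (by exact_mod_cast this)
    have heq : ((fun t => s * t) '' (F : Set S)) ∪ (F : Set S) = (F : Set S) :=
      (Set.eq_of_subset_of_ncard_le Set.subset_union_right
        (by simpa [Set.ncard_coe_finset] using hnat) (fol_finite s F)).symm
    have : s * x ∈ ((fun t => s * t) '' (F : Set S)) ∪ (F : Set S) :=
      Or.inl ⟨x, hx, rfl⟩
    rw [heq] at this
    exact this

end Comb2

section Comb3
variable {S : Type*} [Monoid S] [Countable S]

lemma global_inv (h1 : FolnerCondition S) {ε₀ : ℝ} (hε₀ : 0 < ε₀) {𝓕₀ : Finset S} {N : ℕ}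
    (hbd : ∀ F : Finset S, F.Nonempty → FolIneq ε₀ 𝓕₀ F → F.card < N) :
    ∃ F : Finset S, F.Nonempty ∧ ∀ s : S, ∀ x ∈ F, s * x ∈ F := by
  classical
  have hbd' : ∀ G : Finset S, G.Nonempty → (∀ s ∈ 𝓕₀, ∀ x ∈ G, s * x ∈ G) → G.card < N :=
    fun G hne hinv => hbd G hne (folIneq_of_inv hε₀.le hinv)
  -- maximal 𝓕₀-invariant set
  set T : Set ℕ := {k | ∃ G : Finset S, G.Nonempty ∧ (∀ s ∈ 𝓕₀, ∀ x ∈ G, s * x ∈ G) ∧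
    G.card = k} with hT
  have hTne : T.Nonempty := by
    obtain ⟨G, hne, _, _, hinv0⟩ := inv_of_bounded h1 hε₀ hbd ∅
    exact ⟨G.card, G, hne, hinv0, rfl⟩
  have hTbdd : BddAbove T := by
    refine ⟨N, fun k hk => ?_⟩
    obtain ⟨G, hne, hinv0, rfl⟩ := hk
    exact (hbd' G hne hinv0).le
  have hmem := Nat.sSup_mem hTne hTbdd
  obtain ⟨Fm, hFmne, hFminv, hFmcard⟩ := hmem
  have hmax : ∀ G : Finset S, G.Nonempty → (∀ s ∈ 𝓕₀, ∀ x ∈ G, s * x ∈ G) → G ⊆ Fm := by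
    intro G hne hinv0
    have hUinv : ∀ s ∈ 𝓕₀, ∀ x ∈ Fm ∪ G, s * x ∈ Fm ∪ G := by
      intro s hs x hx
      rcases Finset.mem_union.mp hx with h | h
      · exact Finset.mem_union_left _ (hFminv s hs x h)
      · exact Finset.mem_union_right _ (hinv0 s hs x h)
    have hcard : (Fm ∪ G).card ≤ sSup T := by
      refine le_csSup hTbdd ⟨Fm ∪ G, hFmne.mono Finset.subset_union_left, hUinv, rfl⟩
    have : Fm = Fm ∪ G :=
      Finset.eq_of_subset_of_card_le Finset.subset_union_left (by omega)
    intro x hx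
    rw [this]
    exact Finset.mem_union_right _ hx
  -- pigeonhole over an exhaustion of S
  obtain ⟨f, hf⟩ := exists_surjective_nat S
  have hFn : ∀ n : ℕ, ∃ F : Finset S, F.Nonempty ∧
      (∀ s ∈ (Finset.range (n+1)).image f, ∀ x ∈ F, s * x ∈ F) ∧
      (∀ s ∈ 𝓕₀, ∀ x ∈ F, s * x ∈ F) := by
    intro n
    obtain ⟨F, hne, _, hi, hi0⟩ := inv_of_bounded h1 hε₀ hbd ((Finset.range (n+1)).image f)
    exact ⟨F, hne, hi, hi0⟩
  choose Fn hFnne hFninv hFninv0 using hFn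
  have hsub : ∀ n, Fn n ∈ Fm.powerset := fun n =>
    Finset.mem_powerset.mpr (hmax (Fn n) (hFnne n) (hFninv0 n))
  set g : ℕ → {G // G ∈ Fm.powerset} := fun n => ⟨Fn n, hsub n⟩ with hg
  obtain ⟨G₀, hG₀'⟩ := Finite.exists_infinite_fiber g
  have hG₀ : (g ⁻¹' {G₀}).Infinite := Set.infinite_coe_iff.mp hG₀'
  have hGne : ∀ {n}, g n = G₀ → (G₀ : Finset S).Nonempty ∧
      ∀ s ∈ (Finset.range (n+1)).image f, ∀ x ∈ (G₀ : Finset S), s * x ∈ (G₀ : Finset S) := by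
    intro n hn
    have : Fn n = (G₀ : Finset S) := congrArg Subtype.val hn
    exact ⟨this ▸ hFnne n, this ▸ hFninv n⟩
  obtain ⟨n₀, hn₀⟩ := hG₀.nonempty
  refine ⟨(G₀ : Finset S), (hGne hn₀).1, ?_⟩
  intro s x hx
  obtain ⟨m, rfl⟩ := hf s
  have hinf : ((g ⁻¹' {G₀}) \ Set.Iic m).Infinite := hG₀.diff (Set.finite_Iic m)
  obtain ⟨n, hn⟩ := hinf.nonempty
  have hgn : g n = G₀ := hn.1
  have hmn : m < n + 1 := by
    have := hn.2
    simp only [Set.mem_Iic, not_le] at this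
    omega
  exact (hGne hgn).2 (f m) (Finset.mem_image.mpr ⟨m, Finset.mem_range.mpr hmn, rfl⟩) x hx

end Comb3

/-- If a countable discrete inverse semigroup satisfies the Følner condition but not the
proper Følner condition, then it has a minimal projection: an idempotent `e₀ ∈ E(S)` with
`e₀ f = e₀` for every `f ∈ E(S)`. -/
theorem statement15 (S : Type*) [Monoid S] [Star S] [IsInverseSemigroup S] [Countable S]
    (h1 : FolnerCondition S) (h2 : ¬ ProperFolnerCondition S) :
    ∃ e₀ : S, (∃ s : S, e₀ = star s * s) ∧
      ∀ f : S, (∃ s : S, f = star s * s) → e₀ * f = e₀ := by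
  classical
  by_cases hU : ∀ ε : ℝ, 0 < ε → ∀ 𝓕 : Finset S, ∀ N : ℕ, ∃ F : Finset S,
      F.Nonempty ∧ FolIneq ε 𝓕 F ∧ N ≤ F.card
  · exact absurd (proper_of_unbounded hU) h2
  push_neg at hU
  obtain ⟨ε₀, hε₀, 𝓕₀, N, hbd⟩ := hU
  obtain ⟨F, hFne, hFinv⟩ := global_inv h1 hε₀ hbd
  set Φ : S → Finset S := fun e => F.filter (fun x => e * x = x) with hΦ
  have hΦne : ∀ e : S, e * e = e → (Φ e).Nonempty := by
    intro e he
    obtain ⟨x, hx⟩ := hFne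
    refine ⟨e * x, Finset.mem_filter.mpr ⟨hFinv e x hx, ?_⟩⟩
    rw [← mul_assoc, he]
  set P : ℕ → Prop := fun k => ∃ e : S, e * e = e ∧ (Φ e).card = k with hP
  have hPex : ∃ k, P k := ⟨(Φ 1).card, 1, one_mul 1, rfl⟩
  obtain ⟨e₁, he₁, hek⟩ := Nat.find_spec hPex
  have key : ∀ f : S, f * f = f → Φ e₁ ⊆ Φ f := by
    intro f hf
    have hef : (e₁ * f) * (e₁ * f) = e₁ * f := inv_idem_mul he₁ hf
    have hsub1 : Φ (e₁ * f) ⊆ Φ e₁ := by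
      intro x hx
      obtain ⟨hxF, hxfix⟩ := Finset.mem_filter.mp hx
      refine Finset.mem_filter.mpr ⟨hxF, ?_⟩
      conv_lhs => rw [← hxfix]
      simp only [← mul_assoc]
      rw [he₁, hxfix]
    have hsub2 : Φ (e₁ * f) ⊆ Φ f := by
      intro x hx
      obtain ⟨hxF, hxfix⟩ := Finset.mem_filter.mp hx
      refine Finset.mem_filter.mpr ⟨hxF, ?_⟩
      conv_lhs => rw [← hxfix]
      simp only [← mul_assoc]
      rw [inv_idem_comm hf he₁, mul_assoc e₁ f f, hf, hxfix]
    have hcard : (Φ e₁).card ≤ (Φ (e₁ * f)).card := by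
      rw [hek]
      exact Nat.find_le ⟨e₁ * f, hef, rfl⟩
    have heq : Φ (e₁ * f) = Φ e₁ := Finset.eq_of_subset_of_card_le hsub1 hcard
    rw [← heq]
    exact hsub2
  obtain ⟨x, hxmem⟩ := hΦne e₁ he₁
  have hfix : ∀ f : S, f * f = f → f * x = x := fun f hf =>
    (Finset.mem_filter.mp (key f hf hxmem)).2
  refine ⟨x * star x, ⟨star x, by rw [inv_star_star]⟩, ?_⟩
  rintro f ⟨s, rfl⟩
  have hfidem := inv_idem_star_mul s
  have hxx : (x * star x) * (x * star x) = x * star x := inv_idem_mul_star x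
  calc (x * star x) * (star s * s) = (star s * s) * (x * star x) :=
        inv_idem_comm hxx hfidem
    _ = ((star s * s) * x) * star x := (mul_assoc _ _ _).symm
    _ = x * star x := by rw [hfix _ hfidem]
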